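/- For any integer square matrix A, prime p, and r ≥ 1, tr(A^{p^r}) ≡ tr(A^{p^{r−1}}) (mod p^r). -/

import Mathlib

open Finset

namespace EulerTrace

variable {m : ℕ} (A : Matrix (Fin m) (Fin m) ℤ)

def cw (n : ℕ) [NeZero n] (f : ZMod n → Fin m) : ℤ :=
  ∏ k : ZMod n, A (f k) (f (k + 1))

def sh {n : ℕ} (a : ZMod n) (f : ZMod n → Fin m) : ZMod n → Fin m :=
  fun k => f (k + a)

lemma sh_sh {n : ℕ} (a b : ZMod n) (f : ZMod n → Fin m) :
    sh a (sh b f) = sh (a + b) f := by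
  funext k; simp [sh, add_assoc, add_comm a b]

lemma sh_zero {n : ℕ} (f : ZMod n → Fin m) : sh 0 f = f := by
  funext k; simp [sh]

lemma cw_sh {n : ℕ} [NeZero n] (a : ZMod n) (f : ZMod n → Fin m) :
    cw A n (sh a f) = cw A n f := by
  unfold cw sh
  exact Fintype.prod_equiv (Equiv.addRight a) _ _ (by intro k; simp [add_right_comm])

def pp (n : ℕ) (g : Fin (n + 1) → Fin m) : ℤ :=
  ∏ k : Fin n, A (g k.castSucc) (g k.succ)

lemma entry_formula : ∀ (n : ℕ) (i j : Fin m),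
    (A ^ n) i j =
      ∑ g : Fin (n + 1) → Fin m,
        if g 0 = i ∧ g (Fin.last n) = j then pp A n g else 0 := by
  intro n
  induction n with
  | zero =>
    intro i j
    rw [pow_zero, Matrix.one_apply]
    rw [Fintype.sum_equiv (Equiv.funUnique (Fin 1) (Fin m))
      (fun g => if g 0 = i ∧ g (Fin.last 0) = j then pp A 0 g else 0)
      (fun x => if x = i ∧ x = j then (1:ℤ) else 0)
      (by intro g; simp [pp, Fin.last])]
    by_cases hij : i = j
    · subst hij
      simp
    · rw [if_neg hij]
      apply (Finset.sum_eq_zero _).symm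
      intro x _
      rw [if_neg]
      rintro ⟨h1, h2⟩
      exact hij (h1 ▸ h2 ▸ rfl)
  | succ n ih =>
    intro i j
    rw [pow_succ, Matrix.mul_apply]
    rw [show (∑ x : Fin m, (A ^ n) i x * A x j)
        = ∑ x : Fin m, ∑ g : Fin (n+1) → Fin m,
            (if g 0 = i ∧ g (Fin.last n) = x then pp A n g else 0) * A x j from
      Finset.sum_congr rfl fun x _ => by rw [ih i x, Finset.sum_mul]]
    conv_lhs => rw [Finset.sum_comm]
    conv_rhs => rw [← (Fin.snocEquiv (fun _ : Fin (n + 2) => Fin m)).sum_comp,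
      Fintype.sum_prod_type, Finset.sum_comm]
    apply Finset.sum_congr rfl
    intro g _
    have hpp : ∀ x, pp A (n + 1) (Fin.snoc g x) = pp A n g * A (g (Fin.last n)) x := by
      intro x
      unfold pp
      rw [Fin.prod_univ_castSucc]
      congr 1
      · apply Finset.prod_congr rfl
        intro k _
        rw [Fin.succ_castSucc]
        simp only [Fin.snoc_castSucc]
      · simp [Fin.succ_last, Fin.snoc_last, Fin.snoc_castSucc]
    have h0 : ∀ x, (Fin.snoc g x : Fin (n+2) → Fin m) 0 = g 0 := by
      intro x
      rw [show (0 : Fin (n+2)) = Fin.castSucc 0 by rfl, Fin.snoc_castSucc]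
    simp only [Fin.snocEquiv, Equiv.coe_fn_mk, hpp, h0, Fin.snoc_last]
    by_cases h1 : g 0 = i
    · simp only [h1, true_and, ite_mul, zero_mul]
      rw [Finset.sum_ite_eq univ (g (Fin.last n)) (fun x => pp A n g * A x j),
        Finset.sum_ite_eq' univ j (fun x => pp A n g * A (g (Fin.last n)) x)]
      simp [mul_assoc]
    · simp [h1]


def zEquiv (n : ℕ) [NeZero n] : Fin n ≃ ZMod n where
  toFun t := (t.val : ZMod n)
  invFun y := ⟨y.val, ZMod.val_lt y⟩
  left_inv t := by
    ext
    simp [ZMod.val_natCast, Nat.mod_eq_of_lt t.isLt]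
  right_inv y := ZMod.natCast_rightInverse y

lemma trace_formula (k : ℕ) :
    (A ^ (k + 1)).trace = ∑ f : ZMod (k + 1) → Fin m, cw A (k + 1) f := by
  rw [Matrix.trace]
  simp only [Matrix.diag]
  rw [show (∑ i, (A ^ (k+1)) i i)
      = ∑ i, ∑ g : Fin (k + 2) → Fin m,
          (if g 0 = i ∧ g (Fin.last (k+1)) = i then pp A (k+1) g else 0) from
    Finset.sum_congr rfl fun i _ => entry_formula A (k+1) i i]
  rw [Finset.sum_comm]
  rw [show (∑ g : Fin (k + 2) → Fin m, ∑ i,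
        (if g 0 = i ∧ g (Fin.last (k+1)) = i then pp A (k+1) g else 0))
      = ∑ g : Fin (k + 2) → Fin m,
          (if g 0 = g (Fin.last (k+1)) then pp A (k+1) g else 0) from
    Finset.sum_congr rfl fun g _ => by
      by_cases hP : g 0 = g (Fin.last (k+1))
      · rw [if_pos hP]
        rw [show (∑ i, if g 0 = i ∧ g (Fin.last (k+1)) = i then pp A (k+1) g else 0)
            = ∑ i, if g 0 = i then pp A (k+1) g else 0 from
          Finset.sum_congr rfl fun i _ => by
            by_cases h : g 0 = i
            · rw [if_pos ⟨h, hP ▸ h⟩, if_pos h]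
            · rw [if_neg (fun hc => h hc.1), if_neg h]]
        rw [Finset.sum_ite_eq univ (g 0) (fun _ => pp A (k+1) g)]
        simp
      · rw [if_neg hP]
        apply Finset.sum_eq_zero
        intro i _
        rw [if_neg]
        rintro ⟨h1, h2⟩
        exact hP (h1.trans h2.symm)]
  rw [← Finset.sum_filter]
  symm
  apply Finset.sum_nbij'
    (i := fun f (x : Fin (k + 2)) => f ((x.val : ℕ) : ZMod (k + 1)))
    (j := fun g (y : ZMod (k + 1)) => g ⟨y.val, lt_trans (ZMod.val_lt y) (Nat.lt_succ_self _)⟩)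
  · intro f _
    simp only [Finset.mem_filter, Finset.mem_univ, true_and]
    have h1 : ((0 : Fin (k+2)).val : ZMod (k+1)) = ((Fin.last (k+1)).val : ZMod (k+1)) := by
      simp [Fin.last, ZMod.natCast_self]
    rw [h1]
  · intro g _; exact Finset.mem_univ _
  · intro f _
    funext y
    simp only []
    congr 1
    exact ZMod.natCast_rightInverse y
  · intro g hg
    rw [Finset.mem_filter] at hg
    funext x
    simp only []
    rcases Nat.lt_or_ge x.val (k + 1) with h | h
    · congr 1
      ext
      simp [ZMod.val_natCast, Nat.mod_eq_of_lt h]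
    · have hx : x.val = k + 1 := le_antisymm (Nat.lt_succ_iff.mp x.isLt) h
      have hxl : x = Fin.last (k+1) := by ext; simp [hx, Fin.last]
      rw [show ((x.val : ℕ) : ZMod (k+1)) = 0 by rw [hx]; exact ZMod.natCast_self _]
      rw [hxl, ← hg.2]
      congr 1
  · intro f _
    unfold cw pp
    apply Fintype.prod_equiv (zEquiv (k+1)).symm
    intro x
    have h1 : ((zEquiv (k+1)).symm x).castSucc.val = ((zEquiv (k+1)).symm x).val := rfl
    have h2 : (((zEquiv (k+1)).symm x).succ).val = ((zEquiv (k+1)).symm x).val + 1 := rfl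
    have h3 : ((((zEquiv (k+1)).symm x).val : ℕ) : ZMod (k+1)) = x := by
      exact (zEquiv (k+1)).apply_symm_apply x
    simp only []
    rw [h1, h2]
    push_cast
    rw [h3]


/-- The fiber-product lemma: weight of the pullback of `g` along the projection. -/
lemma cw_periodic (p q : ℕ) [NeZero q] [NeZero (p * q)] (hq : q ∣ p * q)
    (g : ZMod q → Fin m) :
    cw A (p * q) (g ∘ (ZMod.castHom hq (ZMod q))) = (cw A q g) ^ p := by
  set π := ZMod.castHom hq (ZMod q) with hπ
  set h : ZMod q → ℤ := fun y => A (g y) (g (y + 1)) with hh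
  have step1 : cw A (p * q) (g ∘ π) = ∏ k : ZMod (p * q), h (π k) := by
    unfold cw
    apply Finset.prod_congr rfl
    intro k _
    simp [hh, Function.comp, map_add, map_one]
  rw [step1]
  have key : ∀ (a : Fin p) (b : Fin q),
      π ((zEquiv (p*q)) (finProdFinEquiv (a, b))) = (zEquiv q) b := by
    intro a b
    have hv : (finProdFinEquiv (a, b) : Fin (p*q)).val = b.val + q * a.val := rfl
    show π (((finProdFinEquiv (a, b) : Fin (p*q)).val : ℕ) : ZMod (p*q)) = (b.val : ZMod q)
    rw [hv, map_natCast]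
    push_cast
    simp [ZMod.natCast_self]
  calc (∏ k : ZMod (p*q), h (π k))
      = ∏ t : Fin (p*q), h (π ((zEquiv (p*q)) t)) := ((zEquiv (p*q)).prod_comp _).symm
    _ = ∏ x : Fin p × Fin q, h (π ((zEquiv (p*q)) (finProdFinEquiv x))) :=
        (finProdFinEquiv.prod_comp _).symm
    _ = ∏ a : Fin p, ∏ b : Fin q, h (π ((zEquiv (p*q)) (finProdFinEquiv (a, b)))) :=
        Fintype.prod_prod_type _
    _ = ∏ _a : Fin p, ∏ y : ZMod q, h y := by
        apply Finset.prod_congr rfl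
        intro a _
        rw [Finset.prod_congr rfl fun b _ => by rw [key a b]]
        exact (zEquiv q).prod_comp h
    _ = (∏ y : ZMod q, h y) ^ p := by
        rw [Finset.prod_const, Finset.card_univ, Fintype.card_fin]
    _ = (cw A q g) ^ p := rfl

lemma shift_iter {n : ℕ} (f : ZMod n → Fin m) (c : ZMod n) (h : ∀ x, f (x + c) = f x) :
    ∀ (s : ℕ) (x : ZMod n), f (x + s • c) = f x := by
  intro s
  induction s with
  | zero => simp
  | succ s ih =>
    intro x
    have : x + (s + 1) • c = (x + c) + s • c := by
      rw [succ_nsmul]; ring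
    rw [this, ih, h]

lemma exists_mul_eq (p : ℕ) (hp : p.Prime) (j : ℕ) (hj : 1 ≤ j) [NeZero (p ^ j)]
    (a : ZMod (p ^ j)) (ha : a ≠ 0) :
    ∃ c : ZMod (p ^ j), c * a = ((p ^ (j - 1) : ℕ) : ZMod (p ^ j)) := by
  have hav : a.val ≠ 0 := fun h => ha ((ZMod.val_eq_zero a).mp h)
  have hdn : Nat.gcd a.val (p ^ j) ∣ p ^ j := Nat.gcd_dvd_right _ _
  obtain ⟨i, hi, hdi⟩ := (Nat.dvd_prime_pow hp).mp hdn
  have hdlt : Nat.gcd a.val (p ^ j) < p ^ j :=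
    lt_of_le_of_lt (Nat.le_of_dvd (Nat.pos_of_ne_zero hav) (Nat.gcd_dvd_left _ _))
      (ZMod.val_lt a)
  have hij : i ≤ j - 1 := by
    rcases Nat.lt_or_ge i j with h | h
    · omega
    · exfalso
      have : p ^ j ≤ Nat.gcd a.val (p ^ j) := by
        rw [hdi]
        exact Nat.pow_le_pow_right hp.pos h
      omega
  have hdvd : Nat.gcd a.val (p ^ j) ∣ p ^ (j - 1) := hdi ▸ pow_dvd_pow p hij
  obtain ⟨e, he⟩ := hdvd
  refine ⟨((e : ℕ) : ZMod (p ^ j)) * ((Nat.gcdA a.val (p ^ j) : ℤ) : ZMod (p ^ j)), ?_⟩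
  have h2 : ((Nat.gcd a.val (p ^ j) : ℤ) : ZMod (p ^ j))
      = ((a.val : ℕ) : ZMod (p ^ j)) * ((Nat.gcdA a.val (p ^ j) : ℤ) : ZMod (p ^ j))
        + (((p ^ j : ℕ) : ZMod (p ^ j))) * ((Nat.gcdB a.val (p ^ j) : ℤ) : ZMod (p ^ j)) := by
    rw [Nat.gcd_eq_gcd_ab]
    push_cast
    ring
  rw [ZMod.natCast_self, zero_mul, add_zero, ZMod.natCast_rightInverse a] at h2
  have h1 : ((Nat.gcd a.val (p ^ j) : ℕ) : ZMod (p ^ j))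
      = ((Nat.gcdA a.val (p ^ j) : ℤ) : ZMod (p ^ j)) * a := by
    rw [show ((Nat.gcd a.val (p ^ j) : ℕ) : ZMod (p ^ j))
        = ((Nat.gcd a.val (p ^ j) : ℤ) : ZMod (p ^ j)) by push_cast; rfl, h2]
    ring
  calc ((e : ℕ) : ZMod (p ^ j)) * ((Nat.gcdA a.val (p ^ j) : ℤ) : ZMod (p ^ j)) * a
      = ((e : ℕ) : ZMod (p ^ j))
        * (((Nat.gcdA a.val (p ^ j) : ℤ) : ZMod (p ^ j)) * a) := by ring
    _ = ((e : ℕ) : ZMod (p ^ j)) * ((Nat.gcd a.val (p ^ j) : ℕ) : ZMod (p ^ j)) := by rw [h1]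
    _ = ((Nat.gcd a.val (p ^ j) * e : ℕ) : ZMod (p ^ j)) := by push_cast; ring
    _ = ((p ^ (j-1) : ℕ) : ZMod (p ^ j)) := by rw [← he]

lemma periodic_of_fixed (p : ℕ) (hp : p.Prime) (j : ℕ) (hj : 1 ≤ j) [NeZero (p ^ j)]
    (f : ZMod (p ^ j) → Fin m) (a : ZMod (p ^ j)) (ha : a ≠ 0) (hfix : sh a f = f) :
    ∀ x, f (x + ((p ^ (j - 1) : ℕ) : ZMod (p ^ j))) = f x := by
  have hstep : ∀ x, f (x + a) = f x := fun x => congrFun hfix x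
  obtain ⟨c, hc⟩ := exists_mul_eq p hp j hj a ha
  intro x
  rw [← hc, show c * a = c.val • a by rw [nsmul_eq_mul, ZMod.natCast_rightInverse c]]
  exact shift_iter f a hstep c.val x

lemma free_sum {n : ℕ} [NeZero n] (φ : (ZMod n → Fin m) → ℤ) (M : ℤ)
    (hφ : ∀ (a : ZMod n) f, φ (sh a f) = φ f) (S : Finset (ZMod n → Fin m)) :
    (∀ f ∈ S, ∀ a : ZMod n, sh a f ∈ S) →
    (∀ f ∈ S, ∀ a : ZMod n, a ≠ 0 → sh a f ≠ f) →
    (∀ f ∈ S, M ∣ φ f) →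
    (n : ℤ) * M ∣ ∑ f ∈ S, φ f := by
  induction S using Finset.strongInduction with
  | _ S ih =>
    intro hS hfree hM
    rcases S.eq_empty_or_nonempty with rfl | ⟨f, hf⟩
    · simp
    · set O : Finset (ZMod n → Fin m) := Finset.image (fun a : ZMod n => sh a f) univ with hO
      have hinj : Function.Injective (fun a : ZMod n => sh a f) := by
        intro a b hab
        have hab' : sh a f = sh b f := hab
        by_contra hne
        have h1 : sh (-b) (sh a f) = sh (-b) (sh b f) := by rw [hab']
        rw [sh_sh, sh_sh, neg_add_cancel, sh_zero] at h1
        exact hfree f hf (-b + a) (fun h => hne (by linear_combination (norm := abel_nf) h)) h1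
      have hOS : O ⊆ S := by
        intro g hg
        rw [hO, Finset.mem_image] at hg
        obtain ⟨a, _, rfl⟩ := hg
        exact hS f hf a
      have hfO : f ∈ O := by
        rw [hO, Finset.mem_image]
        exact ⟨0, Finset.mem_univ _, sh_zero f⟩
      have hsumO : ∑ g ∈ O, φ g = (n : ℤ) * φ f := by
        rw [hO, Finset.sum_image (fun a _ b _ h => hinj h)]
        rw [Finset.sum_congr rfl fun a _ => hφ a f]
        rw [Finset.sum_const, Finset.card_univ, ZMod.card, nsmul_eq_mul]
      have hsplit : ∑ g ∈ S, φ g = ∑ g ∈ S \ O, φ g + ∑ g ∈ O, φ g :=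
        (Finset.sum_sdiff hOS).symm
      rw [hsplit]
      apply dvd_add
      · apply ih (S \ O) (Finset.sdiff_ssubset hOS ⟨f, hfO⟩)
        · intro g hg a
          rw [Finset.mem_sdiff] at hg ⊢
          refine ⟨hS g hg.1 a, ?_⟩
          intro hmem
          rw [hO, Finset.mem_image] at hmem
          obtain ⟨b, _, hb⟩ := hmem
          apply hg.2
          rw [hO, Finset.mem_image]
          refine ⟨-a + b, Finset.mem_univ _, ?_⟩
          have hb' : sh b f = sh a g := hb
          have := congrArg (sh (-a)) hb'
          rw [sh_sh, sh_sh, neg_add_cancel, sh_zero] at this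
          exact this
        · intro g hg a hane
          exact hfree g (Finset.mem_sdiff.mp hg).1 a hane
        · intro g hg
          exact hM g (Finset.mem_sdiff.mp hg).1
      · rw [hsumO]
        exact mul_dvd_mul_left _ (hM f hf)

lemma int_euler (p : ℕ) (hp : p.Prime) (c : ℤ) (a : ℕ) (ha : 1 ≤ a) :
    ((p : ℤ) ^ a) ∣ c ^ (p ^ a) - c ^ (p ^ (a - 1)) := by
  haveI : Fact p.Prime := ⟨hp⟩
  have hFermat : (p : ℤ) ∣ c ^ p - c := by
    have h1 : ((c ^ p - c : ℤ) : ZMod p) = 0 := by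
      push_cast
      rw [ZMod.pow_card]
      ring
    exact (ZMod.intCast_zmod_eq_zero_iff_dvd _ _).mp h1
  have h2 := dvd_sub_pow_of_dvd_sub hFermat (a - 1)
  have h3 : (c ^ p) ^ (p ^ (a - 1)) = c ^ (p ^ a) := by
    rw [← pow_mul]
    congr 1
    rw [← pow_succ']
    congr 1
    omega
  rw [h3] at h2
  have h4 : a - 1 + 1 = a := by omega
  rw [h4] at h2
  exact_mod_cast h2

/-- generalized version of cw_periodic with an equation for the modulus -/
lemma cw_periodic' (p q n : ℕ) [NeZero q] [NeZero n] (hn : n = p * q) (hq : q ∣ n)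
    (g : ZMod q → Fin m) :
    cw A n (g ∘ (ZMod.castHom hq (ZMod q))) = (cw A q g) ^ p := by
  subst hn
  exact cw_periodic A p q hq g

lemma key_split (p : ℕ) (hp : p.Prime) (j : ℕ) [NeZero (p ^ (j + 1))] [NeZero (p ^ j)]
    (φ : (ZMod (p ^ (j + 1)) → Fin m) → ℤ) (M : ℤ)
    (hφ : ∀ (a : ZMod (p ^ (j + 1))) f, φ (sh a f) = φ f) (hM : ∀ f, M ∣ φ f) :
    ∃ E : ℤ, ((p : ℤ) ^ (j + 1) * M) ∣ E ∧
      (∑ f : ZMod (p ^ (j + 1)) → Fin m, φ f)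
        = (∑ g : ZMod (p ^ j) → Fin m,
            φ (g ∘ (ZMod.castHom (pow_dvd_pow p (Nat.le_succ j)) (ZMod (p ^ j))))) + E := by
  classical
  set π := ZMod.castHom (pow_dvd_pow p (Nat.le_succ j)) (ZMod (p ^ j)) with hπ
  set c : ZMod (p ^ (j + 1)) := ((p ^ j : ℕ) : ZMod (p ^ (j + 1))) with hc
  set Per : (ZMod (p ^ (j + 1)) → Fin m) → Prop := fun f => ∀ k, f (k + c) = f k with hPer
  refine ⟨∑ f ∈ univ.filter (fun f => ¬ Per f), φ f, ?_, ?_⟩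
  · -- divisibility of the non-periodic part
    have := free_sum (n := p ^ (j + 1)) φ M hφ (univ.filter (fun f => ¬ Per f)) ?_ ?_ ?_
    · calc  (p : ℤ) ^ (j + 1) * M
          = ((p ^ (j + 1) : ℕ) : ℤ) * M := by push_cast; ring
        _ ∣ _ := this
    · intro f hf a
      simp only [Finset.mem_filter, Finset.mem_univ, true_and] at hf ⊢
      intro hPa
      apply hf
      intro k
      have h1 := hPa (k - a)
      simp only [sh] at h1
      have e1 : k - a + c + a = k + c := by ring
      have e2 : k - a + a = k := by ring
      rw [e1, e2] at h1
      exact h1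
    · intro f hf a ha
      simp only [Finset.mem_filter, Finset.mem_univ, true_and] at hf
      intro hfix
      apply hf
      intro k
      have := periodic_of_fixed p hp (j + 1) (Nat.le_add_left 1 j) f a ha hfix k
      rwa [Nat.add_sub_cancel] at this
    · intro f _
      exact hM f
  · -- the sum splits
    rw [← Finset.sum_filter_add_sum_filter_not univ Per φ]
    congr 1
    -- periodic part equals the pull-back sum
    symm
    apply Finset.sum_nbij' (i := fun g => g ∘ π)
      (j := fun f (y : ZMod (p ^ j)) => f ((y.val : ℕ) : ZMod (p ^ (j + 1))))
    · intro g _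
      simp only [Finset.mem_filter, Finset.mem_univ, true_and]
      intro k
      show g (π (k + c)) = g (π k)
      have : π c = 0 := by
        rw [hc, map_natCast, ZMod.natCast_self]
      rw [map_add, this, add_zero]
    · intro f _; exact Finset.mem_univ _
    · intro g _
      funext y
      show g (π ((y.val : ℕ) : ZMod (p ^ (j + 1)))) = g y
      rw [map_natCast, ZMod.natCast_rightInverse y]
    · intro f hf
      simp only [Finset.mem_filter, Finset.mem_univ, true_and] at hf
      funext k
      show f (((π k).val : ℕ) : ZMod (p ^ (j + 1))) = f k
      have hval : (π k).val = k.val % p ^ j := by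
        rw [hπ]
        show (ZMod.castHom _ (ZMod (p ^ j)) k).val = k.val % p ^ j
        rw [ZMod.castHom_apply, ← ZMod.natCast_val k, ZMod.val_natCast]
      have hk : k = (((π k).val : ℕ) : ZMod (p ^ (j + 1))) + (k.val / p ^ j) • c := by
        rw [hval, hc, nsmul_eq_mul]
        have : ((k.val % p ^ j : ℕ) : ZMod (p ^ (j + 1)))
            + ((k.val / p ^ j : ℕ) : ZMod (p ^ (j + 1))) * ((p ^ j : ℕ) : ZMod (p ^ (j + 1)))
            = ((k.val % p ^ j + k.val / p ^ j * p ^ j : ℕ) : ZMod (p ^ (j + 1))) := by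
          push_cast; ring
        rw [this, Nat.mod_add_div']
        exact (ZMod.natCast_rightInverse k).symm
      conv_rhs => rw [hk]
      rw [shift_iter f c hf _ _]
    · intro g _
      rfl

lemma trace_formula' (n : ℕ) [NeZero n] :
    (A ^ n).trace = ∑ f : ZMod n → Fin m, cw A n f := by
  obtain ⟨k, rfl⟩ := Nat.exists_eq_succ_of_ne_zero (NeZero.ne n)
  exact trace_formula A k

theorem main (p : ℕ) (hp : p.Prime) (r : ℕ) (hr : 1 ≤ r) :
    ((p : ℤ) ^ r) ∣ (A ^ (p ^ r)).trace - (A ^ (p ^ (r - 1))).trace := by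
  obtain ⟨k, rfl⟩ := Nat.exists_eq_succ_of_ne_zero (Nat.one_le_iff_ne_zero.mp hr)
  simp only [Nat.succ_sub_one]
  haveI : ∀ t : ℕ, NeZero (p ^ t) := fun t => ⟨(pow_pos hp.pos t).ne'⟩
  -- the descending-sum divisibility
  have D_dvd : ∀ j, j ≤ k →
      (p : ℤ) ^ (k + 1) ∣ ∑ g : ZMod (p ^ j) → Fin m,
        ((cw A (p ^ j) g) ^ (p ^ (k + 1 - j)) - (cw A (p ^ j) g) ^ (p ^ (k + 1 - j - 1))) := by
    intro j
    induction j with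
    | zero =>
      intro _
      apply Finset.dvd_sum
      intro g _
      simpa using int_euler p hp (cw A (p ^ 0) g) (k + 1) hr
    | succ j ih =>
      intro hj
      have hj' : j ≤ k := Nat.le_of_succ_le hj
      obtain ⟨E, hE, hEq⟩ := key_split p hp j
        (φ := fun f => (cw A (p ^ (j + 1)) f) ^ (p ^ (k + 1 - (j + 1)))
          - (cw A (p ^ (j + 1)) f) ^ (p ^ (k + 1 - (j + 1) - 1)))
        (M := (p : ℤ) ^ (k + 1 - (j + 1)))
        (by intro a f; rw [cw_sh])
        (by intro f; exact int_euler p hp _ _ (by omega))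
      rw [hEq]
      apply dvd_add
      · -- periodic part equals the level-j sum
        have hcomp : ∀ g : ZMod (p ^ j) → Fin m,
            cw A (p ^ (j + 1)) (g ∘ ZMod.castHom (pow_dvd_pow p (Nat.le_succ j)) (ZMod (p ^ j)))
              = (cw A (p ^ j) g) ^ p :=
          fun g => cw_periodic' A p (p ^ j) (p ^ (j + 1)) (pow_succ' p j) _ g
        rw [show (∑ g : ZMod (p ^ j) → Fin m,
            ((cw A (p ^ (j + 1)) (g ∘ ZMod.castHom (pow_dvd_pow p (Nat.le_succ j))
                (ZMod (p ^ j)))) ^ (p ^ (k + 1 - (j + 1)))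
              - (cw A (p ^ (j + 1)) (g ∘ ZMod.castHom (pow_dvd_pow p (Nat.le_succ j))
                (ZMod (p ^ j)))) ^ (p ^ (k + 1 - (j + 1) - 1))))
            = ∑ g : ZMod (p ^ j) → Fin m,
              ((cw A (p ^ j) g) ^ (p ^ (k + 1 - j)) - (cw A (p ^ j) g) ^ (p ^ (k + 1 - j - 1)))
          from Finset.sum_congr rfl fun g _ => by
            have E1 : k + 1 - (j + 1) + 1 = k + 1 - j := by omega
            have E2 : k + 1 - (j + 1) - 1 + 1 = k + 1 - j - 1 := by omega
            rw [hcomp g, ← pow_mul, ← pow_mul, ← pow_succ', ← pow_succ', E1, E2]]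
        exact ih hj'
      · refine dvd_trans ?_ hE
        rw [← pow_add]
        apply pow_dvd_pow
        omega
  -- now assemble
  rw [trace_formula' A (p ^ (k + 1)), trace_formula' A (p ^ k)]
  obtain ⟨E, hE, hEq⟩ := key_split p hp k
    (φ := fun f => cw A (p ^ (k + 1)) f) (M := 1)
    (by intro a f; rw [cw_sh]) (by intro f; exact one_dvd _)
  rw [hEq]
  have hper : ∀ g : ZMod (p ^ k) → Fin m,
      cw A (p ^ (k + 1)) (g ∘ ZMod.castHom (pow_dvd_pow p (Nat.le_succ k)) (ZMod (p ^ k)))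
        = (cw A (p ^ k) g) ^ p :=
    fun g => cw_periodic' A p (p ^ k) (p ^ (k + 1)) (pow_succ' p k) _ g
  have hstep : (∑ g : ZMod (p ^ k) → Fin m,
        cw A (p ^ (k + 1)) (g ∘ ZMod.castHom (pow_dvd_pow p (Nat.le_succ k)) (ZMod (p ^ k))))
        + E - ∑ f : ZMod (p ^ k) → Fin m, cw A (p ^ k) f
      = (∑ g : ZMod (p ^ k) → Fin m,
          ((cw A (p ^ k) g) ^ (p ^ (k + 1 - k)) - (cw A (p ^ k) g) ^ (p ^ (k + 1 - k - 1)))) + E := by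
    rw [Finset.sum_congr rfl fun g _ => hper g]
    rw [Finset.sum_sub_distrib]
    have e1 : k + 1 - k = 1 := by omega
    rw [e1]
    simp only [Nat.sub_self, pow_zero, pow_one]
    ring
  rw [hstep]
  apply dvd_add
  · exact D_dvd k le_rfl
  · rw [mul_one] at hE
    exact hE


end EulerTrace

theorem euler_congruence_trace (m : ℕ) (A : Matrix (Fin m) (Fin m) ℤ)
    (p : ℕ) (hp : p.Prime) (r : ℕ) (hr : 1 ≤ r) :
    (A ^ (p ^ r)).trace ≡ (A ^ (p ^ (r - 1))).trace [ZMOD (p ^ r)] := by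
  have h := EulerTrace.main A p hp r hr
  exact (Int.ModEq.symm (Int.modEq_iff_dvd.mpr h))
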